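/- Every tree-like ball space is chain intersection stable: for every nonempty family F of nonempty chains in 𝓑 such that the family {⋂𝓒 : 𝓒 ∈ F} is itself a chain under inclusion, the union ⋃F is a chain in 𝓑 whose intersection equals ⋂_{𝓒 ∈ F} ⋂𝓒. -/
import Mathlib


/-- Every tree-like ball space is chain intersection stable: for a nonempty family `F`
of nonempty chains in `𝓑` with nonempty intersections, such that the intersections
form a chain, the union `⋃₀ F` is a chain in `𝓑` whose intersection is
`⋂_{𝓒 ∈ F} ⋂ 𝓒`. -/
theorem treelike_chainIntersectionStable {X : Type*} [Nonempty X] (B : Set (Set X))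
    (hBne : B.Nonempty) (hball : ∀ b ∈ B, b.Nonempty)
    (htree : ∀ b₁ ∈ B, ∀ b₂ ∈ B, (b₁ ∩ b₂).Nonempty → b₁ ⊆ b₂ ∨ b₂ ⊆ b₁)
    (F : Set (Set (Set X))) (hF : F.Nonempty)
    (hchains : ∀ C ∈ F, C ⊆ B ∧ C.Nonempty ∧ IsChain (· ⊆ ·) C ∧ (⋂₀ C).Nonempty)
    (hIchain : IsChain (· ⊆ ·) {I | ∃ C ∈ F, I = ⋂₀ C}) :
    ⋃₀ F ⊆ B ∧ IsChain (· ⊆ ·) (⋃₀ F) ∧ ⋂₀ (⋃₀ F) = ⋂ C ∈ F, ⋂₀ C := by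
  have hsub : ⋃₀ F ⊆ B := by
    rintro b ⟨C, hC, hb⟩
    exact (hchains C hC).1 hb
  refine ⟨hsub, ?_, ?_⟩
  · rintro b₁ ⟨C₁, hC₁, hb₁⟩ b₂ ⟨C₂, hC₂, hb₂⟩ hne
    have hI : ⋂₀ C₁ ⊆ ⋂₀ C₂ ∨ ⋂₀ C₂ ⊆ ⋂₀ C₁ := by
      by_cases h : ⋂₀ C₁ = ⋂₀ C₂
      · exact Or.inl h.le
      · exact hIchain ⟨C₁, hC₁, rfl⟩ ⟨C₂, hC₂, rfl⟩ h
    have hint : (b₁ ∩ b₂).Nonempty := by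
      rcases hI with h | h
      · obtain ⟨x, hx⟩ := (hchains C₁ hC₁).2.2.2
        exact ⟨x, hx b₁ hb₁, (h hx) b₂ hb₂⟩
      · obtain ⟨x, hx⟩ := (hchains C₂ hC₂).2.2.2
        exact ⟨x, (h hx) b₁ hb₁, hx b₂ hb₂⟩
    exact htree b₁ (hsub ⟨C₁, hC₁, hb₁⟩) b₂ (hsub ⟨C₂, hC₂, hb₂⟩) hint
  · ext x
    simp only [Set.mem_sInter, Set.mem_sUnion, Set.mem_iInter]
    constructor
    · intro h C hC b hb
      exact h b ⟨C, hC, hb⟩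
    · rintro h b ⟨C, hC, hb⟩
      exact h C hC b hb
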